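/- arXiv:2306.05700 — 11 statements merged into one kernel-verified Lean document; each statement's English description precedes it below -/
import Mathlib

section
/- There exists a unique function Q* : S × A × B → ℝ satisfying the minimax optimal Bellman equation Q*(s,a,b) = R(s,a,b) + γ · Σ_{s'∈S} P(s'|s,a,b) · max_{a'∈A} min_{b'∈B} Q*(s',a',b') for all (s,a,b) ∈ S × A × B; that is, F has a unique fixed point. -/
private lemma abs_sup'_sub_sup'_le {α : Type*} (s : Finset α) (hs : s.Nonempty)
    (f g : α → ℝ) (c : ℝ) (h : ∀ a ∈ s, |f a - g a| ≤ c) :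
    |s.sup' hs f - s.sup' hs g| ≤ c := by
  rw [abs_sub_le_iff]
  constructor
  · rw [sub_le_iff_le_add]
    refine Finset.sup'_le _ _ fun a ha => ?_
    have h1 := (abs_sub_le_iff.mp (h a ha)).1
    have h2 := Finset.le_sup' g ha
    linarith
  · rw [sub_le_iff_le_add]
    refine Finset.sup'_le _ _ fun a ha => ?_
    have h1 := (abs_sub_le_iff.mp (h a ha)).2
    have h2 := Finset.le_sup' f ha
    linarith

private lemma abs_inf'_sub_inf'_le {α : Type*} (s : Finset α) (hs : s.Nonempty)
    (f g : α → ℝ) (c : ℝ) (h : ∀ a ∈ s, |f a - g a| ≤ c) :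
    |s.inf' hs f - s.inf' hs g| ≤ c := by
  rw [abs_sub_le_iff]
  constructor
  · rw [sub_le_iff_le_add]
    obtain ⟨a, ha, hEq⟩ := Finset.exists_mem_eq_inf' hs g
    have h1 := (abs_sub_le_iff.mp (h a ha)).1
    have h2 := Finset.inf'_le f ha
    rw [hEq]; linarith
  · rw [sub_le_iff_le_add]
    obtain ⟨a, ha, hEq⟩ := Finset.exists_mem_eq_inf' hs f
    have h1 := (abs_sub_le_iff.mp (h a ha)).2
    have h2 := Finset.inf'_le g ha
    rw [hEq]; linarith

theorem bellman_unique_fixed_point {S A B : Type*}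
    [Fintype S] [Fintype A] [Fintype B] [Nonempty S] [Nonempty A] [Nonempty B]
    (P : S × A × B → S → ℝ) (hP0 : ∀ x s', 0 ≤ P x s') (hP1 : ∀ x, ∑ s' : S, P x s' = 1)
    (R : S × A × B → ℝ) (γ : ℝ) (hγ0 : 0 ≤ γ) (hγ1 : γ < 1) :
    ∃! Qstar : S × A × B → ℝ, ∀ x : S × A × B,
      Qstar x = R x + γ * ∑ s' : S, P x s' *
        (Finset.univ.sup' Finset.univ_nonempty fun a' : A =>
          Finset.univ.inf' Finset.univ_nonempty fun b' : B => Qstar (s', a', b')) := by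
  set M : (S × A × B → ℝ) → S → ℝ := fun Q s' =>
    Finset.univ.sup' Finset.univ_nonempty fun a' : A =>
      Finset.univ.inf' Finset.univ_nonempty fun b' : B => Q (s', a', b') with hM
  set F : (S × A × B → ℝ) → (S × A × B → ℝ) := fun Q x =>
    R x + γ * ∑ s' : S, P x s' * M Q s' with hF
  have hMlip : ∀ Q Q' : S × A × B → ℝ, ∀ s' : S, |M Q s' - M Q' s'| ≤ dist Q Q' := by
    intro Q Q' s'
    refine abs_sup'_sub_sup'_le _ _ _ _ _ fun a' _ => ?_
    refine abs_inf'_sub_inf'_le _ _ _ _ _ fun b' _ => ?_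
    rw [← Real.dist_eq]
    exact dist_le_pi_dist Q Q' (s', a', b')
  have hlip : ∀ Q Q' : S × A × B → ℝ, dist (F Q) (F Q') ≤ γ * dist Q Q' := by
    intro Q Q'
    refine dist_pi_le_iff (by positivity) |>.mpr fun x => ?_
    rw [Real.dist_eq]
    simp only [hF]
    have : (R x + γ * ∑ s' : S, P x s' * M Q s') - (R x + γ * ∑ s' : S, P x s' * M Q' s')
        = γ * ∑ s' : S, P x s' * (M Q s' - M Q' s') := by
      have hsum : ∑ s' : S, P x s' * (M Q s' - M Q' s')
          = (∑ s' : S, P x s' * M Q s') - ∑ s' : S, P x s' * M Q' s' := by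
        rw [← Finset.sum_sub_distrib]
        exact Finset.sum_congr rfl fun _ _ => mul_sub _ _ _
      rw [hsum]; ring
    rw [this, abs_mul, abs_of_nonneg hγ0]
    refine mul_le_mul_of_nonneg_left ?_ hγ0
    calc |∑ s' : S, P x s' * (M Q s' - M Q' s')| ≤ ∑ s' : S, |P x s' * (M Q s' - M Q' s')| :=
          Finset.abs_sum_le_sum_abs _ _
    _ ≤ ∑ s' : S, P x s' * dist Q Q' := by
        refine Finset.sum_le_sum fun s' _ => ?_
        rw [abs_mul, abs_of_nonneg (hP0 x s')]
        exact mul_le_mul_of_nonneg_left (hMlip Q Q' s') (hP0 x s')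
    _ = dist Q Q' := by rw [← Finset.sum_mul, hP1, one_mul]
  have hc : ContractingWith ⟨γ, hγ0⟩ F := by
    constructor
    · exact_mod_cast hγ1
    · exact LipschitzWith.of_dist_le_mul hlip
  have key : ∀ Q : S × A × B → ℝ, (∀ x, Q x = F Q x) ↔ Function.IsFixedPt F Q := by
    intro Q
    constructor
    · intro h; exact funext fun x => (h x).symm
    · intro h x; exact (congrFun h x).symm
  refine ⟨ContractingWith.fixedPoint F hc, ?_, ?_⟩
  · exact (key _).mpr hc.fixedPoint_isFixedPt
  · intro Q hQ
    exact hc.fixedPoint_unique ((key Q).mp hQ)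
end

section
/- Let Q* : S × A × B → ℝ satisfy Q* = F Q* and let Q : S × A × B → ℝ be arbitrary. Let μ : S × A → B satisfy that μ(s,a) minimizes b ↦ Q(s,a,b) for every (s,a), and let π : S → A satisfy that π(s) maximizes a ↦ Q*(s,a,μ(s,a)) for every s. Then for every (s,a,b) ∈ S × A × B: (F Q)(s,a,b) − Q*(s,a,b) ≥ γ · Σ_{s'∈S} P(s'|s,a,b) · ( Q(s', π(s'), μ(s', π(s'))) − Q*(s', π(s'), μ(s', π(s'))) ). -/
/-- The minimax optimal Bellman operator for a two-player zero-sum Markov game. -/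
noncomputable def minimaxBellman {S A B : Type*} [Fintype S] [Fintype A] [Fintype B]
    [Nonempty A] [Nonempty B] (P : S × A × B → S → ℝ) (R : S × A × B → ℝ) (γ : ℝ)
    (Q : S × A × B → ℝ) : S × A × B → ℝ := fun x =>
  R x + γ * ∑ s' : S, P x s' *
    (Finset.univ.sup' Finset.univ_nonempty fun a' : A =>
      Finset.univ.inf' Finset.univ_nonempty fun b' : B => Q (s', a', b'))

theorem bellman_lower_bound {S A B : Type*}
    [Fintype S] [Fintype A] [Fintype B] [Nonempty S] [Nonempty A] [Nonempty B]
    (P : S × A × B → S → ℝ) (hP0 : ∀ x s', 0 ≤ P x s') (hP1 : ∀ x, ∑ s' : S, P x s' = 1)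
    (R : S × A × B → ℝ) (γ : ℝ) (hγ0 : 0 ≤ γ) (hγ1 : γ < 1)
    (Qstar : S × A × B → ℝ) (hQstar : minimaxBellman P R γ Qstar = Qstar)
    (Q : S × A × B → ℝ)
    (μ : S × A → B) (hμ : ∀ s a b, Q (s, a, μ (s, a)) ≤ Q (s, a, b))
    (π : S → A) (hπ : ∀ s a, Qstar (s, a, μ (s, a)) ≤ Qstar (s, π s, μ (s, π s))) :
    ∀ x : S × A × B,
      γ * ∑ s' : S, P x s' *
        (Q (s', π s', μ (s', π s')) - Qstar (s', π s', μ (s', π s')))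
      ≤ minimaxBellman P R γ Q x - Qstar x := by
  intro x
  set MQ : S → ℝ := fun s' =>
    Finset.univ.sup' Finset.univ_nonempty fun a' : A =>
      Finset.univ.inf' Finset.univ_nonempty fun b' : B => Q (s', a', b') with hMQ
  set MQs : S → ℝ := fun s' =>
    Finset.univ.sup' Finset.univ_nonempty fun a' : A =>
      Finset.univ.inf' Finset.univ_nonempty fun b' : B => Qstar (s', a', b') with hMQs
  have key : ∀ s' : S,
      Q (s', π s', μ (s', π s')) - Qstar (s', π s', μ (s', π s')) ≤ MQ s' - MQs s' := by
    intro s'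
    have h1 : Q (s', π s', μ (s', π s')) ≤ MQ s' := by
      refine le_trans ?_ (Finset.le_sup' _ (Finset.mem_univ (π s')))
      exact Finset.le_inf' _ _ fun b _ => hμ s' (π s') b
    have h2 : MQs s' ≤ Qstar (s', π s', μ (s', π s')) := by
      refine Finset.sup'_le _ _ fun a _ => ?_
      exact le_trans (Finset.inf'_le _ (Finset.mem_univ (μ (s', a)))) (hπ s' a)
    linarith
  conv_rhs => rw [← hQstar]
  simp only [minimaxBellman]
  have hsum : ∑ s' : S, P x s' *
      (Q (s', π s', μ (s', π s')) - Qstar (s', π s', μ (s', π s')))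
      ≤ ∑ s' : S, P x s' * (MQ s' - MQs s') := by
    exact Finset.sum_le_sum fun s' _ => mul_le_mul_of_nonneg_left (key s') (hP0 x s')
  have := mul_le_mul_of_nonneg_left hsum hγ0
  calc γ * ∑ s' : S, P x s' *
        (Q (s', π s', μ (s', π s')) - Qstar (s', π s', μ (s', π s')))
      ≤ γ * ∑ s' : S, P x s' * (MQ s' - MQs s') := this
    _ = (R x + γ * ∑ s' : S, P x s' * MQ s') - (R x + γ * ∑ s' : S, P x s' * MQs s') := by
        simp only [mul_sub, Finset.sum_sub_distrib]; ring
end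

section
/- Let Q* : S × A × B → ℝ satisfy Q* = F Q* and let Q : S × A × B → ℝ be arbitrary. Let μ* : S × A → B satisfy that μ*(s,a) minimizes b ↦ Q*(s,a,b) for every (s,a), and let τ : S → A satisfy that τ(s) maximizes a ↦ Q(s,a,μ*(s,a)) for every s. Then for every (s,a,b) ∈ S × A × B: (F Q)(s,a,b) − Q*(s,a,b) ≤ γ · Σ_{s'∈S} P(s'|s,a,b) · ( Q(s', τ(s'), μ*(s', τ(s'))) − Q*(s', τ(s'), μ*(s', τ(s'))) ). -/
theorem bellman_upper_bound {S A B : Type*}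
    [Fintype S] [Fintype A] [Fintype B] [Nonempty S] [Nonempty A] [Nonempty B]
    (P : S × A × B → S → ℝ) (hP0 : ∀ x s', 0 ≤ P x s') (hP1 : ∀ x, ∑ s' : S, P x s' = 1)
    (R : S × A × B → ℝ) (γ : ℝ) (hγ0 : 0 ≤ γ) (hγ1 : γ < 1)
    (Qstar : S × A × B → ℝ) (hQstar : minimaxBellman P R γ Qstar = Qstar)
    (Q : S × A × B → ℝ)
    (μstar : S × A → B) (hμstar : ∀ s a b, Qstar (s, a, μstar (s, a)) ≤ Qstar (s, a, b))
    (τ : S → A) (hτ : ∀ s a, Q (s, a, μstar (s, a)) ≤ Q (s, τ s, μstar (s, τ s))) :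
    ∀ x : S × A × B,
      minimaxBellman P R γ Q x - Qstar x
      ≤ γ * ∑ s' : S, P x s' *
        (Q (s', τ s', μstar (s', τ s')) - Qstar (s', τ s', μstar (s', τ s'))) := by

  intro x
  conv_lhs => rw [← hQstar]
  simp only [minimaxBellman]
  rw [sub_add_eq_sub_sub, add_sub_cancel_left, ← mul_sub, ← Finset.sum_sub_distrib]
  apply mul_le_mul_of_nonneg_left _ hγ0
  apply Finset.sum_le_sum
  intro s' _
  rw [← mul_sub]
  apply mul_le_mul_of_nonneg_left _ (hP0 x s')
  apply sub_le_sub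
  · apply Finset.sup'_le
    intro a _
    calc Finset.univ.inf' Finset.univ_nonempty (fun b' : B => Q (s', a, b'))
        ≤ Q (s', a, μstar (s', a)) := Finset.inf'_le _ (Finset.mem_univ _)
      _ ≤ Q (s', τ s', μstar (s', τ s')) := hτ s' a
  · calc Qstar (s', τ s', μstar (s', τ s'))
        = Finset.univ.inf' Finset.univ_nonempty (fun b' : B => Qstar (s', τ s', b')) := by
          apply le_antisymm
          · apply Finset.le_inf'
            intro b _
            exact hμstar s' (τ s') b
          · exact Finset.inf'_le _ (Finset.mem_univ _)
      _ ≤ _ := Finset.le_sup' (fun a' : A => Finset.univ.inf' Finset.univ_nonempty fun b' : B => Qstar (s', a', b')) (Finset.mem_univ (τ s'))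
end

section
/- Consider the pathwise minimax Q-learning system (Q_k) and the lower comparison system (Q_k^L) driven by the same noise sequence (w_k). If Q_0^L(s,a,b) ≤ Q_0(s,a,b) for all (s,a,b) ∈ S × A × B, then Q_k^L(s,a,b) ≤ Q_k(s,a,b) for all k ≥ 0 and all (s,a,b) ∈ S × A × B. -/
theorem lower_comparison_system_bounds_q_learning {S A B : Type*}
    [Fintype S] [Fintype A] [Fintype B] [Nonempty S] [Nonempty A] [Nonempty B]
    (P : S × A × B → S → ℝ) (hP0 : ∀ x s', 0 ≤ P x s') (hP1 : ∀ x, ∑ s' : S, P x s' = 1)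
    (R : S × A × B → ℝ) (γ : ℝ) (hγ0 : 0 ≤ γ) (hγ1 : γ < 1)
    (Qstar : S × A × B → ℝ)
    (hQstar : ∀ x : S × A × B, Qstar x = R x + γ * ∑ s' : S, P x s' *
      (Finset.univ.sup' Finset.univ_nonempty fun a' : A =>
        Finset.univ.inf' Finset.univ_nonempty fun b' : B => Qstar (s', a', b')))
    (α : ℝ) (hα : α ∈ Set.Ioo (0 : ℝ) 1)
    (d : S × A × B → ℝ) (hd : ∀ x, d x ∈ Set.Ioo (0 : ℝ) 1)
    (w : ℕ → S × A × B → ℝ)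
    -- the pathwise minimax Q-learning system
    (Q : ℕ → S × A × B → ℝ)
    (hQ : ∀ k (x : S × A × B), Q (k + 1) x = Q k x + α *
      (d x * (R x + γ * (∑ s' : S, P x s' *
        (Finset.univ.sup' Finset.univ_nonempty fun a' : A =>
          Finset.univ.inf' Finset.univ_nonempty fun b' : B => Q k (s', a', b'))) - Q k x)
        + w k x))
    -- πstar s maximizes a ↦ min_b Qstar (s, a, b)
    (πstar : S → A)
    (hπstar : ∀ s a,
      (Finset.univ.inf' Finset.univ_nonempty fun b : B => Qstar (s, a, b)) ≤
        Finset.univ.inf' Finset.univ_nonempty fun b : B => Qstar (s, πstar s, b))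
    -- the lower comparison system
    (QL : ℕ → S × A × B → ℝ)
    -- ν k (s, a) minimizes b ↦ QL k (s, a, b) - Qstar (s, a, b)
    (ν : ℕ → S × A → B)
    (hν : ∀ k s a b,
      QL k (s, a, ν k (s, a)) - Qstar (s, a, ν k (s, a)) ≤ QL k (s, a, b) - Qstar (s, a, b))
    (hQL : ∀ k (x : S × A × B), QL (k + 1) x - Qstar x =
      (1 - α * d x) * (QL k x - Qstar x)
      + α * d x * γ * (∑ s' : S, P x s' *
          (QL k (s', πstar s', ν k (s', πstar s'))
            - Qstar (s', πstar s', ν k (s', πstar s'))))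
      + α * w k x)
    (h0 : ∀ x, QL 0 x ≤ Q 0 x) :
    ∀ k x, QL k x ≤ Q k x := by
  intro k
  induction k with
  | zero => exact h0
  | succ k IH =>
    intro x
    set Mk : S → ℝ := fun s' => Finset.univ.sup' Finset.univ_nonempty fun a' : A =>
        Finset.univ.inf' Finset.univ_nonempty fun b' : B => Q k (s', a', b') with hMk
    set Ms : S → ℝ := fun s' => Finset.univ.sup' Finset.univ_nonempty fun a' : A =>
        Finset.univ.inf' Finset.univ_nonempty fun b' : B => Qstar (s', a', b') with hMs
    set L : S → ℝ := fun s' => QL k (s', πstar s', ν k (s', πstar s'))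
        - Qstar (s', πstar s', ν k (s', πstar s')) with hL
    have hterm : ∀ s' : S, L s' ≤ Mk s' - Ms s' := by
      intro s'
      obtain ⟨b1, -, hb1⟩ := Finset.exists_mem_eq_inf' (Finset.univ_nonempty (α := B))
        (fun b' : B => Q k (s', πstar s', b'))
      have h1 : Ms s' ≤ Finset.univ.inf' Finset.univ_nonempty
          fun b' : B => Qstar (s', πstar s', b') :=
        Finset.sup'_le _ _ fun a _ => hπstar s' a
      have h2 : (Finset.univ.inf' Finset.univ_nonempty fun b' : B => Q k (s', πstar s', b'))
          ≤ Mk s' := by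
        simp only [hMk]
        exact Finset.le_sup' (fun a' : A => Finset.univ.inf' Finset.univ_nonempty
          fun b' : B => Q k (s', a', b')) (Finset.mem_univ (πstar s'))
      have h3 : (Finset.univ.inf' Finset.univ_nonempty fun b' : B => Qstar (s', πstar s', b'))
          ≤ Qstar (s', πstar s', b1) := Finset.inf'_le _ (Finset.mem_univ b1)
      have h4 := hν k s' (πstar s') b1
      have h5 := IH (s', πstar s', b1)
      simp only [hL]
      rw [hb1] at h2
      linarith
    have hsum : ∑ s' : S, P x s' * L s' ≤ ∑ s' : S, P x s' * (Mk s' - Ms s') :=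
      Finset.sum_le_sum fun s' _ => mul_le_mul_of_nonneg_left (hterm s') (hP0 x s')
    have hsplit : ∑ s' : S, P x s' * (Mk s' - Ms s')
        = (∑ s' : S, P x s' * Mk s') - ∑ s' : S, P x s' * Ms s' := by
      rw [← Finset.sum_sub_distrib]
      exact Finset.sum_congr rfl fun s' _ => mul_sub _ _ _
    have h2' : QL (k + 1) x = Qstar x + ((1 - α * d x) * (QL k x - Qstar x)
        + α * d x * γ * (∑ s' : S, P x s' * L s') + α * w k x) := by
      have := hQL k x; linarith
    have key : Q (k + 1) x - QL (k + 1) x = (1 - α * d x) * (Q k x - QL k x)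
        + α * d x * γ * ((∑ s' : S, P x s' * Mk s') - (∑ s' : S, P x s' * Ms s')
          - ∑ s' : S, P x s' * L s') := by
      rw [hQ k x, h2', hQstar x]
      ring
    have hαd : 0 < α * d x := mul_pos hα.1 (hd x).1
    have hαd1 : α * d x < 1 := by
      nlinarith [hα.1, hα.2, (hd x).1, (hd x).2]
    have t1 : 0 ≤ (1 - α * d x) * (Q k x - QL k x) :=
      mul_nonneg (by linarith) (by linarith [IH x])
    have t2 : 0 ≤ α * d x * γ * ((∑ s' : S, P x s' * Mk s') - (∑ s' : S, P x s' * Ms s')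
        - ∑ s' : S, P x s' * L s') :=
      mul_nonneg (mul_nonneg hαd.le hγ0) (by linarith)
    linarith
end

section
/- Consider the pathwise minimax Q-learning system (Q_k) and the upper comparison system (Q_k^U) driven by the same noise sequence (w_k). If Q_0^U(s,a,b) ≥ Q_0(s,a,b) for all (s,a,b) ∈ S × A × B, then Q_k^U(s,a,b) ≥ Q_k(s,a,b) for all k ≥ 0 and all (s,a,b) ∈ S × A × B. -/
theorem upper_comparison_system_bounds_q_learning {S A B : Type*}
    [Fintype S] [Fintype A] [Fintype B] [Nonempty S] [Nonempty A] [Nonempty B]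
    (P : S × A × B → S → ℝ) (hP0 : ∀ x s', 0 ≤ P x s') (hP1 : ∀ x, ∑ s' : S, P x s' = 1)
    (R : S × A × B → ℝ) (γ : ℝ) (hγ0 : 0 ≤ γ) (hγ1 : γ < 1)
    (Qstar : S × A × B → ℝ)
    (hQstar : ∀ x : S × A × B, Qstar x = R x + γ * ∑ s' : S, P x s' *
      (Finset.univ.sup' Finset.univ_nonempty fun a' : A =>
        Finset.univ.inf' Finset.univ_nonempty fun b' : B => Qstar (s', a', b')))
    (α : ℝ) (hα : α ∈ Set.Ioo (0 : ℝ) 1)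
    (d : S × A × B → ℝ) (hd : ∀ x, d x ∈ Set.Ioo (0 : ℝ) 1)
    (w : ℕ → S × A × B → ℝ)
    -- the pathwise minimax Q-learning system
    (Q : ℕ → S × A × B → ℝ)
    (hQ : ∀ k (x : S × A × B), Q (k + 1) x = Q k x + α *
      (d x * (R x + γ * (∑ s' : S, P x s' *
        (Finset.univ.sup' Finset.univ_nonempty fun a' : A =>
          Finset.univ.inf' Finset.univ_nonempty fun b' : B => Q k (s', a', b'))) - Q k x)
        + w k x))
    -- μstar (s, a) minimizes b ↦ Qstar (s, a, b)
    (μstar : S × A → B)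
    (hμstar : ∀ s a b, Qstar (s, a, μstar (s, a)) ≤ Qstar (s, a, b))
    -- the upper comparison system
    (QU : ℕ → S × A × B → ℝ)
    -- τ k s maximizes a ↦ QU k (s, a, μstar (s, a)) - Qstar (s, a, μstar (s, a))
    (τ : ℕ → S → A)
    (hτ : ∀ k s a,
      QU k (s, a, μstar (s, a)) - Qstar (s, a, μstar (s, a)) ≤
        QU k (s, τ k s, μstar (s, τ k s)) - Qstar (s, τ k s, μstar (s, τ k s)))
    (hQU : ∀ k (x : S × A × B), QU (k + 1) x - Qstar x =
      (1 - α * d x) * (QU k x - Qstar x)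
      + α * d x * γ * (∑ s' : S, P x s' *
          (QU k (s', τ k s', μstar (s', τ k s'))
            - Qstar (s', τ k s', μstar (s', τ k s'))))
      + α * w k x)
    (h0 : ∀ x, Q 0 x ≤ QU 0 x) :
    ∀ k x, Q k x ≤ QU k x := by
  intro k
  induction k with
  | zero => exact h0
  | succ k ih =>
    intro x
    have hdx := hd x
    have hαd1 : α * d x ≤ 1 := by nlinarith [hα.1, hα.2, hdx.1, hdx.2]
    have hαd0 : 0 ≤ α * d x := le_of_lt (mul_pos hα.1 hdx.1)
    have key : ∀ s' : S,
        (Finset.univ.sup' Finset.univ_nonempty fun a' : A =>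
          Finset.univ.inf' Finset.univ_nonempty fun b' : B => Q k (s', a', b')) ≤
        (Finset.univ.sup' Finset.univ_nonempty fun a' : A =>
          Finset.univ.inf' Finset.univ_nonempty fun b' : B => Qstar (s', a', b'))
        + (QU k (s', τ k s', μstar (s', τ k s'))
            - Qstar (s', τ k s', μstar (s', τ k s'))) := by
      intro s'
      apply Finset.sup'_le
      intro a' _
      have h1 : (Finset.univ.inf' Finset.univ_nonempty fun b' : B => Q k (s', a', b'))
          ≤ Q k (s', a', μstar (s', a')) := Finset.inf'_le _ (Finset.mem_univ _)
      have h2 : Qstar (s', a', μstar (s', a')) ≤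
          Finset.univ.inf' Finset.univ_nonempty fun b' : B => Qstar (s', a', b') :=
        Finset.le_inf' _ _ (fun b _ => hμstar s' a' b)
      have h3 : (Finset.univ.inf' Finset.univ_nonempty fun b' : B => Qstar (s', a', b')) ≤
          Finset.univ.sup' Finset.univ_nonempty fun a'' : A =>
            Finset.univ.inf' Finset.univ_nonempty fun b' : B => Qstar (s', a'', b') :=
        Finset.le_sup' (fun a'' : A =>
          Finset.univ.inf' Finset.univ_nonempty fun b' : B => Qstar (s', a'', b'))
          (Finset.mem_univ a')
      have h4 := ih (s', a', μstar (s', a'))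
      have h5 := hτ k s' a'
      linarith
    have sumle : (∑ s' : S, P x s' *
          (Finset.univ.sup' Finset.univ_nonempty fun a' : A =>
            Finset.univ.inf' Finset.univ_nonempty fun b' : B => Q k (s', a', b')))
        ≤ (∑ s' : S, P x s' *
          (Finset.univ.sup' Finset.univ_nonempty fun a' : A =>
            Finset.univ.inf' Finset.univ_nonempty fun b' : B => Qstar (s', a', b')))
        + (∑ s' : S, P x s' *
          (QU k (s', τ k s', μstar (s', τ k s'))
            - Qstar (s', τ k s', μstar (s', τ k s')))) := by
      rw [← Finset.sum_add_distrib]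
      apply Finset.sum_le_sum
      intro s' _
      rw [← mul_add]
      exact mul_le_mul_of_nonneg_left (key s') (hP0 x s')
    set SQ := (∑ s' : S, P x s' *
          (Finset.univ.sup' Finset.univ_nonempty fun a' : A =>
            Finset.univ.inf' Finset.univ_nonempty fun b' : B => Q k (s', a', b'))) with hSQ
    set M := (∑ s' : S, P x s' *
          (Finset.univ.sup' Finset.univ_nonempty fun a' : A =>
            Finset.univ.inf' Finset.univ_nonempty fun b' : B => Qstar (s', a', b'))) with hM
    set SC := (∑ s' : S, P x s' *
          (QU k (s', τ k s', μstar (s', τ k s'))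
            - Qstar (s', τ k s', μstar (s', τ k s')))) with hSC
    have hq := hQ k x
    have hqu := hQU k x
    have hqs := hQstar x
    have ihx := ih x
    have e1 : (1 - α * d x) * (Q k x) ≤ (1 - α * d x) * (QU k x) :=
      mul_le_mul_of_nonneg_left ihx (by linarith)
    have e2 : α * d x * γ * SQ ≤ α * d x * γ * (M + SC) :=
      mul_le_mul_of_nonneg_left sumle (by positivity)
    nlinarith [e1, e2, hq, hqu, hqs]
end

section
/- Consider the lower comparison system (Q_k^L) and the lower-upper comparison system (Q_k^{LU}) driven by the same noise sequence (w_k). If Q_0^L(s,a,b) ≤ Q_0^{LU}(s,a,b) for all (s,a,b) ∈ S × A × B, then Q_k^L(s,a,b) ≤ Q_k^{LU}(s,a,b) for all k ≥ 0 and all (s,a,b) ∈ S × A × B. -/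
theorem lower_upper_comparison_system_bounds_lower {S A B : Type*}
    [Fintype S] [Fintype A] [Fintype B] [Nonempty S] [Nonempty A] [Nonempty B]
    (P : S × A × B → S → ℝ) (hP0 : ∀ x s', 0 ≤ P x s') (hP1 : ∀ x, ∑ s' : S, P x s' = 1)
    (R : S × A × B → ℝ) (γ : ℝ) (hγ0 : 0 ≤ γ) (hγ1 : γ < 1)
    (Qstar : S × A × B → ℝ)
    (hQstar : ∀ x : S × A × B, Qstar x = R x + γ * ∑ s' : S, P x s' *
      (Finset.univ.sup' Finset.univ_nonempty fun a' : A =>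
        Finset.univ.inf' Finset.univ_nonempty fun b' : B => Qstar (s', a', b')))
    (α : ℝ) (hα : α ∈ Set.Ioo (0 : ℝ) 1)
    (d : S × A × B → ℝ) (hd : ∀ x, d x ∈ Set.Ioo (0 : ℝ) 1)
    (w : ℕ → S × A × B → ℝ)
    -- πstar s maximizes a ↦ min_b Qstar (s, a, b)
    (πstar : S → A)
    (hπstar : ∀ s a,
      (Finset.univ.inf' Finset.univ_nonempty fun b : B => Qstar (s, a, b)) ≤
        Finset.univ.inf' Finset.univ_nonempty fun b : B => Qstar (s, πstar s, b))
    -- μstar (s, a) minimizes b ↦ Qstar (s, a, b)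
    (μstar : S × A → B)
    (hμstar : ∀ s a b, Qstar (s, a, μstar (s, a)) ≤ Qstar (s, a, b))
    -- the lower comparison system
    (QL : ℕ → S × A × B → ℝ)
    -- ν k (s, a) minimizes b ↦ QL k (s, a, b) - Qstar (s, a, b)
    (ν : ℕ → S × A → B)
    (hν : ∀ k s a b,
      QL k (s, a, ν k (s, a)) - Qstar (s, a, ν k (s, a)) ≤ QL k (s, a, b) - Qstar (s, a, b))
    (hQL : ∀ k (x : S × A × B), QL (k + 1) x - Qstar x =
      (1 - α * d x) * (QL k x - Qstar x)
      + α * d x * γ * (∑ s' : S, P x s' *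
          (QL k (s', πstar s', ν k (s', πstar s'))
            - Qstar (s', πstar s', ν k (s', πstar s'))))
      + α * w k x)
    -- the lower-upper comparison system
    (QLU : ℕ → S × A × B → ℝ)
    (hQLU : ∀ k (x : S × A × B), QLU (k + 1) x - Qstar x =
      (1 - α * d x) * (QLU k x - Qstar x)
      + α * d x * γ * (∑ s' : S, P x s' *
          (QLU k (s', πstar s', μstar (s', πstar s'))
            - Qstar (s', πstar s', μstar (s', πstar s'))))
      + α * w k x)
    (h0 : ∀ x, QL 0 x ≤ QLU 0 x) :
    ∀ k x, QL k x ≤ QLU k x := by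
  intro k
  induction k with
  | zero => exact h0
  | succ k ih =>
    intro x
    have key : QL (k+1) x - Qstar x ≤ QLU (k+1) x - Qstar x := by
      rw [hQL k x, hQLU k x]
      have h1 : (0:ℝ) ≤ 1 - α * d x := by
        have := (hα.2 : α < 1); have := (hd x).2
        nlinarith [hα.1, (hd x).1]
      have h2 : (0:ℝ) ≤ α * d x * γ := by
        have := hα.1.le; have := (hd x).1.le; positivity
      have hA : (1 - α * d x) * (QL k x - Qstar x) ≤
          (1 - α * d x) * (QLU k x - Qstar x) :=
        mul_le_mul_of_nonneg_left (by have := ih x; linarith) h1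
      have hB : (∑ s' : S, P x s' *
            (QL k (s', πstar s', ν k (s', πstar s'))
              - Qstar (s', πstar s', ν k (s', πstar s')))) ≤
          ∑ s' : S, P x s' *
            (QLU k (s', πstar s', μstar (s', πstar s'))
              - Qstar (s', πstar s', μstar (s', πstar s'))) := by
        apply Finset.sum_le_sum
        intro s' _
        have hle : QL k (s', πstar s', ν k (s', πstar s'))
            - Qstar (s', πstar s', ν k (s', πstar s')) ≤
            QLU k (s', πstar s', μstar (s', πstar s'))
            - Qstar (s', πstar s', μstar (s', πstar s')) := by
          have h3 := hν k s' (πstar s') (μstar (s', πstar s'))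
          have h4 := ih (s', πstar s', μstar (s', πstar s'))
          linarith
        exact mul_le_mul_of_nonneg_left hle (hP0 x s')
      have hB' := mul_le_mul_of_nonneg_left hB h2
      linarith
    linarith
end

section
/- Consider the upper comparison system (Q_k^U) and the upper-lower comparison system (Q_k^{UL}) driven by the same noise sequence (w_k). If Q_0^U(s,a,b) ≥ Q_0^{UL}(s,a,b) for all (s,a,b) ∈ S × A × B, then Q_k^U(s,a,b) ≥ Q_k^{UL}(s,a,b) for all k ≥ 0 and all (s,a,b) ∈ S × A × B. -/
theorem upper_lower_comparison_system_bounds_upper {S A B : Type*}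
    [Fintype S] [Fintype A] [Fintype B] [Nonempty S] [Nonempty A] [Nonempty B]
    (P : S × A × B → S → ℝ) (hP0 : ∀ x s', 0 ≤ P x s') (hP1 : ∀ x, ∑ s' : S, P x s' = 1)
    (R : S × A × B → ℝ) (γ : ℝ) (hγ0 : 0 ≤ γ) (hγ1 : γ < 1)
    (Qstar : S × A × B → ℝ)
    (hQstar : ∀ x : S × A × B, Qstar x = R x + γ * ∑ s' : S, P x s' *
      (Finset.univ.sup' Finset.univ_nonempty fun a' : A =>
        Finset.univ.inf' Finset.univ_nonempty fun b' : B => Qstar (s', a', b')))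
    (α : ℝ) (hα : α ∈ Set.Ioo (0 : ℝ) 1)
    (d : S × A × B → ℝ) (hd : ∀ x, d x ∈ Set.Ioo (0 : ℝ) 1)
    (w : ℕ → S × A × B → ℝ)
    -- πstar s maximizes a ↦ min_b Qstar (s, a, b)
    (πstar : S → A)
    (hπstar : ∀ s a,
      (Finset.univ.inf' Finset.univ_nonempty fun b : B => Qstar (s, a, b)) ≤
        Finset.univ.inf' Finset.univ_nonempty fun b : B => Qstar (s, πstar s, b))
    -- μstar (s, a) minimizes b ↦ Qstar (s, a, b)
    (μstar : S × A → B)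
    (hμstar : ∀ s a b, Qstar (s, a, μstar (s, a)) ≤ Qstar (s, a, b))
    -- the upper comparison system
    (QU : ℕ → S × A × B → ℝ)
    -- τ k s maximizes a ↦ QU k (s, a, μstar (s, a)) - Qstar (s, a, μstar (s, a))
    (τ : ℕ → S → A)
    (hτ : ∀ k s a,
      QU k (s, a, μstar (s, a)) - Qstar (s, a, μstar (s, a)) ≤
        QU k (s, τ k s, μstar (s, τ k s)) - Qstar (s, τ k s, μstar (s, τ k s)))
    (hQU : ∀ k (x : S × A × B), QU (k + 1) x - Qstar x =
      (1 - α * d x) * (QU k x - Qstar x)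
      + α * d x * γ * (∑ s' : S, P x s' *
          (QU k (s', τ k s', μstar (s', τ k s'))
            - Qstar (s', τ k s', μstar (s', τ k s'))))
      + α * w k x)
    -- the upper-lower comparison system
    (QUL : ℕ → S × A × B → ℝ)
    (hQUL : ∀ k (x : S × A × B), QUL (k + 1) x - Qstar x =
      (1 - α * d x) * (QUL k x - Qstar x)
      + α * d x * γ * (∑ s' : S, P x s' *
          (QUL k (s', πstar s', μstar (s', πstar s'))
            - Qstar (s', πstar s', μstar (s', πstar s'))))
      + α * w k x)
    (h0 : ∀ x, QUL 0 x ≤ QU 0 x) :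
    ∀ k x, QUL k x ≤ QU k x := by
  intro k
  induction k with
  | zero => exact h0
  | succ k ih =>
    intro x
    have key : QUL (k + 1) x - Qstar x ≤ QU (k + 1) x - Qstar x := by
      rw [hQU k x, hQUL k x]
      have hc1 : 0 ≤ 1 - α * d x := by
        have := hα.2; have := (hd x).2; have := hα.1.le; have := (hd x).1.le
        nlinarith
      have hc2 : 0 ≤ α * d x * γ :=
        mul_nonneg (mul_nonneg hα.1.le (hd x).1.le) hγ0
      have hsum : (∑ s' : S, P x s' *
          (QUL k (s', πstar s', μstar (s', πstar s'))
            - Qstar (s', πstar s', μstar (s', πstar s')))) ≤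
          ∑ s' : S, P x s' *
          (QU k (s', τ k s', μstar (s', τ k s'))
            - Qstar (s', τ k s', μstar (s', τ k s'))) := by
        apply Finset.sum_le_sum
        intro s' _
        apply mul_le_mul_of_nonneg_left _ (hP0 x s')
        calc QUL k (s', πstar s', μstar (s', πstar s'))
              - Qstar (s', πstar s', μstar (s', πstar s'))
            ≤ QU k (s', πstar s', μstar (s', πstar s'))
              - Qstar (s', πstar s', μstar (s', πstar s')) := by
              have := ih (s', πstar s', μstar (s', πstar s')); linarith
          _ ≤ _ := hτ k s' (πstar s')
      have h1 : (1 - α * d x) * (QUL k x - Qstar x) ≤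
          (1 - α * d x) * (QU k x - Qstar x) :=
        mul_le_mul_of_nonneg_left (by have := ih x; linarith) hc1
      have h2 := mul_le_mul_of_nonneg_left hsum hc2
      linarith
    linarith
end

section
/- Let n be a nonempty finite index set with cardinality N, let ρ ∈ (0,1), α ∈ ℝ, W_max ≥ 0, and let A be an n × n real matrix with Σ_j |A_{ij}| ≤ ρ for every row i. Let x_0 ∈ ℝ^n and let (W_k)_{k≥0} be n × n real symmetric positive semidefinite matrices such that W_max·I − W_k is positive semidefinite for every k. Define the matrix recursion X_0 = x_0 x_0^T and X_{k+1} = A X_k A^T + α² W_k. Then for every k ≥ 0, trace(X_k) ≤ N² α² W_max / (1 − ρ) + N² · ‖x_0‖₂² · ρ^{2k}, where ‖x_0‖₂² = Σ_i x_0(i)². -/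
open Matrix Finset

-- quadratic form on single-vector combos
lemma quad_single {n : Type*} [Fintype n] [DecidableEq n] (M : Matrix n n ℝ)
    (i j : n) (a b : ℝ) (hij : i ≠ j) :
    (Pi.single i a + Pi.single j b) ⬝ᵥ M *ᵥ (Pi.single i a + Pi.single j b)
      = a * a * M i i + a * b * M i j + b * a * M j i + b * b * M j j := by
  simp [Matrix.mulVec, dotProduct, Pi.single_apply, mul_ite, ite_mul,
    mul_add, add_mul, Finset.sum_add_distrib, Finset.mul_sum, hij, hij.symm]
  ring

lemma psd_diag_le {n : Type*} [Fintype n] [DecidableEq n] {M : Matrix n n ℝ} {c : ℝ}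
    (hle : (c • (1 : Matrix n n ℝ) - M).PosSemidef) (i : n) : M i i ≤ c := by
  have h := hle.dotProduct_mulVec_nonneg (Pi.single i 1)
  simp [Matrix.mulVec, dotProduct, Pi.single_apply, mul_ite, ite_mul,
    Matrix.sub_apply, Matrix.smul_apply, Matrix.one_apply] at h
  linarith

lemma psd_entry_le {n : Type*} [Fintype n] [DecidableEq n] {M : Matrix n n ℝ} {c : ℝ}
    (hM : M.PosSemidef) (hle : (c • (1 : Matrix n n ℝ) - M).PosSemidef) (i j : n) :
    |M i j| ≤ c := by
  have hdi := psd_diag_le hle i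
  have hdj := psd_diag_le hle j
  rcases eq_or_ne i j with rfl | hij
  · have h0 : 0 ≤ M i i := by
      have h := hM.dotProduct_mulVec_nonneg (Pi.single i 1)
      simpa [Matrix.mulVec, dotProduct, Pi.single_apply, mul_ite, ite_mul] using h
    rw [abs_of_nonneg h0]; exact hdi
  · have hsym : M j i = M i j := by
      have := hM.1.apply j i; simpa using this.symm
    have h1 := hM.dotProduct_mulVec_nonneg (Pi.single i 1 + Pi.single j 1)
    have h2 := hM.dotProduct_mulVec_nonneg (Pi.single i 1 + Pi.single j (-1))
    simp only [star_trivial] at h1 h2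
    rw [quad_single M i j 1 1 hij] at h1
    rw [quad_single M i j 1 (-1) hij] at h2
    rw [abs_le]
    constructor <;> nlinarith [hsym]

theorem autocorrelation_recursion_trace_bound {n : Type*} [Fintype n] [Nonempty n]
    [DecidableEq n]
    (ρ α Wmax : ℝ) (hρ : ρ ∈ Set.Ioo (0 : ℝ) 1) (hWmax : 0 ≤ Wmax)
    (A : Matrix n n ℝ) (hA : ∀ i, ∑ j, |A i j| ≤ ρ)
    (x0 : n → ℝ)
    (W : ℕ → Matrix n n ℝ)
    (hWpsd : ∀ k, (W k).PosSemidef)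
    (hWle : ∀ k, (Wmax • (1 : Matrix n n ℝ) - W k).PosSemidef)
    (X : ℕ → Matrix n n ℝ)
    (hX0 : X 0 = Matrix.vecMulVec x0 x0)
    (hX : ∀ k, X (k + 1) = A * X k * A.transpose + (α ^ 2) • W k) :
    ∀ k, (X k).trace ≤ (Fintype.card n : ℝ) ^ 2 * α ^ 2 * Wmax / (1 - ρ)
      + (Fintype.card n : ℝ) ^ 2 * (∑ i, x0 i ^ 2) * ρ ^ (2 * k) := by
  obtain ⟨hρ0, hρ1⟩ := hρ
  have hρ2 : 0 < 1 - ρ ^ 2 := by nlinarith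
  set S : ℝ := ∑ i, x0 i ^ 2 with hSdef
  have hS : 0 ≤ S := Finset.sum_nonneg fun i _ => sq_nonneg _
  set C : ℝ := α ^ 2 * Wmax / (1 - ρ ^ 2) with hCdef
  have hD : 0 ≤ α ^ 2 * Wmax := mul_nonneg (sq_nonneg _) hWmax
  have hC : 0 ≤ C := div_nonneg hD hρ2.le
  have hCeq : ρ ^ 2 * C + α ^ 2 * Wmax = C := by
    rw [hCdef, mul_div_assoc', div_add' _ _ _ hρ2.ne', div_left_inj' hρ2.ne']; ring
  -- bound on W entries
  have hW : ∀ k i j, |W k i j| ≤ Wmax := fun k i j =>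
    psd_entry_le (hWpsd k) (hWle k) i j
  -- conjugation bound
  have hmul : ∀ (B : Matrix n n ℝ) (b : ℝ), 0 ≤ b → (∀ p q, |B p q| ≤ b) →
      ∀ i j, |(A * B * A.transpose) i j| ≤ ρ ^ 2 * b := by
    intro B b hb hB i j
    have habs : ∀ p, |A i p| ≤ ρ := fun p =>
      (Finset.single_le_sum (fun q _ => abs_nonneg (A i q)) (Finset.mem_univ p)).trans (hA i)
    have hent : (A * B * A.transpose) i j = ∑ q, (∑ p, A i p * B p q) * A j q := by
      simp [Matrix.mul_apply, Matrix.transpose_apply]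
    rw [hent]
    calc |∑ q, (∑ p, A i p * B p q) * A j q|
        ≤ ∑ q, |(∑ p, A i p * B p q) * A j q| := Finset.abs_sum_le_sum_abs _ _
      _ ≤ ∑ q, (ρ * b) * |A j q| := by
          apply Finset.sum_le_sum
          intro q _
          rw [abs_mul]
          apply mul_le_mul_of_nonneg_right _ (abs_nonneg _)
          calc |∑ p, A i p * B p q| ≤ ∑ p, |A i p * B p q| := Finset.abs_sum_le_sum_abs _ _
            _ ≤ ∑ p, |A i p| * b := by
                apply Finset.sum_le_sum
                intro p _
                rw [abs_mul]
                exact mul_le_mul_of_nonneg_left (hB p q) (abs_nonneg _)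
            _ = (∑ p, |A i p|) * b := by rw [Finset.sum_mul]
            _ ≤ ρ * b := mul_le_mul_of_nonneg_right (hA i) hb
      _ = (ρ * b) * ∑ q, |A j q| := by rw [Finset.mul_sum]
      _ ≤ (ρ * b) * ρ := mul_le_mul_of_nonneg_left (hA j)
            (mul_nonneg hρ0.le hb)
      _ = ρ ^ 2 * b := by ring
  -- entrywise bound by induction
  have key : ∀ k, ∀ p q, |X k p q| ≤ C + S * ρ ^ (2 * k) := by
    intro k
    induction k with
    | zero =>
      intro p q
      rw [hX0]
      simp only [Matrix.vecMulVec_apply, Nat.mul_zero, pow_zero, mul_one]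
      have h1 : x0 p ^ 2 ≤ S := Finset.single_le_sum (fun i _ => sq_nonneg (x0 i))
        (Finset.mem_univ p)
      have h2 : x0 q ^ 2 ≤ S := Finset.single_le_sum (fun i _ => sq_nonneg (x0 i))
        (Finset.mem_univ q)
      have : |x0 p * x0 q| ≤ S := by
        rw [abs_mul]
        nlinarith [abs_nonneg (x0 p), abs_nonneg (x0 q), sq_abs (x0 p), sq_abs (x0 q),
          sq_nonneg (|x0 p| - |x0 q|)]
      linarith
    | succ k ih =>
      intro p q
      have hbnd : 0 ≤ C + S * ρ ^ (2 * k) :=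
        add_nonneg hC (mul_nonneg hS (pow_nonneg hρ0.le _))
      rw [hX k]
      simp only [Matrix.add_apply, Matrix.smul_apply, smul_eq_mul]
      calc |(A * X k * A.transpose) p q + α ^ 2 * W k p q|
          ≤ |(A * X k * A.transpose) p q| + |α ^ 2 * W k p q| := abs_add_le _ _
        _ ≤ ρ ^ 2 * (C + S * ρ ^ (2 * k)) + α ^ 2 * Wmax := by
            apply add_le_add (hmul (X k) _ hbnd (ih) p q)
            rw [abs_mul, abs_of_nonneg (sq_nonneg α)]
            exact mul_le_mul_of_nonneg_left (hW k p q) (sq_nonneg α)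
        _ = C + S * ρ ^ (2 * (k + 1)) := by
            rw [show 2 * (k + 1) = 2 * k + 2 by ring, pow_add]
            nlinarith [hCeq]
  -- conclude
  intro k
  set N : ℝ := (Fintype.card n : ℝ) with hN
  have hN1 : 1 ≤ N := by
    simp only [hN, Nat.one_le_cast]
    exact Fintype.card_pos
  have htr : (X k).trace ≤ N * (C + S * ρ ^ (2 * k)) := by
    rw [Matrix.trace]
    calc ∑ i, (X k).diag i ≤ ∑ _i : n, (C + S * ρ ^ (2 * k)) := by
          apply Finset.sum_le_sum
          intro i _
          exact (le_abs_self _).trans (key k i i)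
      _ = N * (C + S * ρ ^ (2 * k)) := by
          rw [Finset.sum_const, nsmul_eq_mul, Finset.card_univ]
  refine htr.trans ?_
  have hρs : 0 < 1 - ρ := by linarith
  have hN0 : (0:ℝ) ≤ N := zero_le_one.trans hN1
  have h1 : N * C ≤ N ^ 2 * α ^ 2 * Wmax / (1 - ρ) := by
    rw [hCdef, mul_div_assoc', div_le_div_iff₀ hρ2 hρs]
    nlinarith [mul_nonneg (mul_nonneg (mul_nonneg hN0 hD) (sub_nonneg.2 hN1)) hρ2.le,
      mul_nonneg (mul_nonneg (mul_nonneg hN0 hD) hρ0.le) hρs.le]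
  have h2 : N * (S * ρ ^ (2 * k)) ≤ N ^ 2 * S * ρ ^ (2 * k) := by
    have hs : 0 ≤ S * ρ ^ (2 * k) := mul_nonneg hS (pow_nonneg hρ0.le _)
    nlinarith [mul_nonneg (mul_nonneg (sub_nonneg.2 hN1) hN0) hs]
  nlinarith [h1, h2]
end

section
/- Consider the lower comparison system (Q_k^L) and the lower-upper comparison system (Q_k^{LU}) driven by the same noise sequence (w_k). Let d_min := min_{(s,a,b)} d(s,a,b), d_max := max_{(s,a,b)} d(s,a,b), and ρ := 1 − α d_min (1 − γ). Then for every k ≥ 0, ‖Q_{k+1}^L − Q_{k+1}^{LU}‖_∞ ≤ ρ · ‖Q_k^L − Q_k^{LU}‖_∞ + 2 α γ d_max · ‖Q_k^{LU} − Q*‖_∞, where ‖Q‖_∞ = max_{(s,a,b)∈S×A×B} |Q(s,a,b)|. -/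
theorem lower_error_system_one_step_bound {S A B : Type*}
    [Fintype S] [Fintype A] [Fintype B] [Nonempty S] [Nonempty A] [Nonempty B]
    (P : S × A × B → S → ℝ) (hP0 : ∀ x s', 0 ≤ P x s') (hP1 : ∀ x, ∑ s' : S, P x s' = 1)
    (R : S × A × B → ℝ) (γ : ℝ) (hγ0 : 0 ≤ γ) (hγ1 : γ < 1)
    (Qstar : S × A × B → ℝ)
    (hQstar : ∀ x : S × A × B, Qstar x = R x + γ * ∑ s' : S, P x s' *
      (Finset.univ.sup' Finset.univ_nonempty fun a' : A =>
        Finset.univ.inf' Finset.univ_nonempty fun b' : B => Qstar (s', a', b')))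
    (α : ℝ) (hα : α ∈ Set.Ioo (0 : ℝ) 1)
    (d : S × A × B → ℝ) (hd : ∀ x, d x ∈ Set.Ioo (0 : ℝ) 1)
    (w : ℕ → S × A × B → ℝ)
    -- πstar s maximizes a ↦ min_b Qstar (s, a, b)
    (πstar : S → A)
    (hπstar : ∀ s a,
      (Finset.univ.inf' Finset.univ_nonempty fun b : B => Qstar (s, a, b)) ≤
        Finset.univ.inf' Finset.univ_nonempty fun b : B => Qstar (s, πstar s, b))
    -- μstar (s, a) minimizes b ↦ Qstar (s, a, b)
    (μstar : S × A → B)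
    (hμstar : ∀ s a b, Qstar (s, a, μstar (s, a)) ≤ Qstar (s, a, b))
    -- the lower comparison system
    (QL : ℕ → S × A × B → ℝ)
    -- ν k (s, a) minimizes b ↦ QL k (s, a, b) - Qstar (s, a, b)
    (ν : ℕ → S × A → B)
    (hν : ∀ k s a b,
      QL k (s, a, ν k (s, a)) - Qstar (s, a, ν k (s, a)) ≤ QL k (s, a, b) - Qstar (s, a, b))
    (hQL : ∀ k (x : S × A × B), QL (k + 1) x - Qstar x =
      (1 - α * d x) * (QL k x - Qstar x)
      + α * d x * γ * (∑ s' : S, P x s' *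
          (QL k (s', πstar s', ν k (s', πstar s'))
            - Qstar (s', πstar s', ν k (s', πstar s'))))
      + α * w k x)
    -- the lower-upper comparison system
    (QLU : ℕ → S × A × B → ℝ)
    (hQLU : ∀ k (x : S × A × B), QLU (k + 1) x - Qstar x =
      (1 - α * d x) * (QLU k x - Qstar x)
      + α * d x * γ * (∑ s' : S, P x s' *
          (QLU k (s', πstar s', μstar (s', πstar s'))
            - Qstar (s', πstar s', μstar (s', πstar s'))))
      + α * w k x) :
    ∀ k, ‖QL (k + 1) - QLU (k + 1)‖ ≤
      (1 - α * (Finset.univ.inf' Finset.univ_nonempty d) * (1 - γ)) * ‖QL k - QLU k‖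
      + 2 * α * γ * (Finset.univ.sup' Finset.univ_nonempty d) * ‖QLU k - Qstar‖ := by
  intro k
  obtain ⟨hα0, hα1⟩ := hα
  set dmin := Finset.univ.inf' Finset.univ_nonempty d with hdmin
  set dmax := Finset.univ.sup' Finset.univ_nonempty d with hdmax
  set E := ‖QL k - QLU k‖ with hE
  set U := ‖QLU k - Qstar‖ with hU
  have hE0 : (0:ℝ) ≤ E := norm_nonneg _
  have hU0 : (0:ℝ) ≤ U := norm_nonneg _
  have hdmin_pos : 0 < dmin := by
    rw [hdmin, Finset.lt_inf'_iff]
    exact fun x _ => (hd x).1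
  have hdmin_lt : dmin < 1 := by
    rw [hdmin, Finset.inf'_lt_iff]
    exact ⟨Classical.arbitrary _, Finset.mem_univ _, (hd _).2⟩
  have hdmax_le : ∀ x, d x ≤ dmax := fun x => Finset.le_sup' d (Finset.mem_univ x)
  have hdmin_le : ∀ x, dmin ≤ d x := fun x => Finset.inf'_le d (Finset.mem_univ x)
  have had : α * dmin < 1 := by nlinarith [mul_lt_mul_of_pos_left hdmin_lt hα0]
  have hρ0 : 0 ≤ 1 - α * dmin * (1 - γ) := by
    nlinarith [mul_nonneg (mul_nonneg hα0.le hdmin_pos.le) hγ0]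
  have hdmax0 : (0:ℝ) ≤ dmax := hdmin_pos.le.trans
    ((hdmin_le (Classical.arbitrary _)).trans (hdmax_le (Classical.arbitrary _)))
  have hRHS0 : 0 ≤ (1 - α * dmin * (1 - γ)) * E + 2 * α * γ * dmax * U := by
    have h2 : (0:ℝ) ≤ 2 * α * γ * dmax :=
      mul_nonneg (mul_nonneg (mul_nonneg (by norm_num) hα0.le) hγ0) hdmax0
    exact add_nonneg (mul_nonneg hρ0 hE0) (mul_nonneg h2 hU0)
  rw [pi_norm_le_iff_of_nonneg hRHS0]
  intro x
  rw [Real.norm_eq_abs, Pi.sub_apply]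
  -- the pointwise difference term
  set D : S → ℝ := fun s' =>
    (QL k (s', πstar s', ν k (s', πstar s')) - Qstar (s', πstar s', ν k (s', πstar s')))
    - (QLU k (s', πstar s', μstar (s', πstar s')) - Qstar (s', πstar s', μstar (s', πstar s')))
    with hD
  have hEpt : ∀ y : S × A × B, |QL k y - QLU k y| ≤ E := by
    intro y
    have := norm_le_pi_norm (QL k - QLU k) y
    simpa [Real.norm_eq_abs] using this
  have hUpt : ∀ y : S × A × B, |QLU k y - Qstar y| ≤ U := by
    intro y
    have := norm_le_pi_norm (QLU k - Qstar) y
    simpa [Real.norm_eq_abs] using this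
  have hDbound : ∀ s' : S, |D s'| ≤ E + 2 * U := by
    intro s'
    set y1 : S × A × B := (s', πstar s', ν k (s', πstar s')) with hy1
    set y2 : S × A × B := (s', πstar s', μstar (s', πstar s')) with hy2
    have hup : D s' ≤ E := by
      have h1 : QL k y1 - Qstar y1 ≤ QL k y2 - Qstar y2 := hν k s' (πstar s') _
      have h2 := (abs_le.mp (hEpt y2)).2
      simp only [hD]
      linarith
    have hlo : -(E + 2 * U) ≤ D s' := by
      have h1 := (abs_le.mp (hEpt y1)).1
      have h2 := (abs_le.mp (hUpt y1)).1
      have h3 := (abs_le.mp (hUpt y2)).2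
      simp only [hD]
      linarith
    rw [abs_le]
    exact ⟨hlo, by linarith⟩
  have hs : ∑ s' : S, P x s' * D s' =
      (∑ s' : S, P x s' * (QL k (s', πstar s', ν k (s', πstar s'))
        - Qstar (s', πstar s', ν k (s', πstar s'))))
      - (∑ s' : S, P x s' * (QLU k (s', πstar s', μstar (s', πstar s'))
        - Qstar (s', πstar s', μstar (s', πstar s')))) := by
    rw [← Finset.sum_sub_distrib]
    exact Finset.sum_congr rfl fun s' _ => by simp [hD]; ring
  have key : QL (k+1) x - QLU (k+1) x =
      (1 - α * d x) * (QL k x - QLU k x) + α * d x * γ * ∑ s' : S, P x s' * D s' := by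
    have h1 := hQL k x
    have h2 := hQLU k x
    rw [hs]
    linarith [h1, h2, mul_sub (α * d x * γ)
      (∑ s' : S, P x s' * (QL k (s', πstar s', ν k (s', πstar s'))
        - Qstar (s', πstar s', ν k (s', πstar s'))))
      (∑ s' : S, P x s' * (QLU k (s', πstar s', μstar (s', πstar s'))
        - Qstar (s', πstar s', μstar (s', πstar s'))))]
  have hsum : |∑ s' : S, P x s' * D s'| ≤ E + 2 * U := by
    calc |∑ s' : S, P x s' * D s'| ≤ ∑ s' : S, |P x s' * D s'| :=
          Finset.abs_sum_le_sum_abs _ _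
      _ ≤ ∑ s' : S, P x s' * (E + 2 * U) := by
          apply Finset.sum_le_sum
          intro s' _
          rw [abs_mul, abs_of_nonneg (hP0 x s')]
          exact mul_le_mul_of_nonneg_left (hDbound s') (hP0 x s')
      _ = E + 2 * U := by rw [← Finset.sum_mul, hP1 x, one_mul]
  have hdx := hd x
  have h1dx : 0 ≤ 1 - α * d x := by nlinarith [hdx.1, hdx.2]
  have hex := hEpt x
  calc |QL (k+1) x - QLU (k+1) x|
      ≤ (1 - α * d x) * E + α * d x * γ * (E + 2 * U) := by
        rw [key]
        refine (abs_add_le _ _).trans ?_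
        gcongr
        · rw [abs_mul, abs_of_nonneg h1dx]
          exact mul_le_mul_of_nonneg_left (hEpt x) h1dx
        · rw [abs_mul]
          have hnn : (0:ℝ) ≤ α * d x * γ := mul_nonneg (mul_nonneg hα0.le hdx.1.le) hγ0
          rw [abs_of_nonneg hnn]
          exact mul_le_mul_of_nonneg_left hsum hnn
    _ ≤ (1 - α * dmin * (1 - γ)) * E + 2 * α * γ * dmax * U := by
        nlinarith [mul_nonneg (mul_nonneg (mul_nonneg hα0.le (by linarith : (0:ℝ) ≤ 1 - γ))
            (sub_nonneg.mpr (hdmin_le x))) hE0,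
          mul_nonneg (mul_nonneg (mul_nonneg hα0.le hγ0)
            (sub_nonneg.mpr (hdmax_le x))) hU0]
end

section
/- Consider the upper comparison system (Q_k^U) and the upper-lower comparison system (Q_k^{UL}) driven by the same noise sequence (w_k). Let d_min := min_{(s,a,b)} d(s,a,b), d_max := max_{(s,a,b)} d(s,a,b), and ρ := 1 − α d_min (1 − γ). Then for every k ≥ 0, ‖Q_{k+1}^U − Q_{k+1}^{UL}‖_∞ ≤ ρ · ‖Q_k^U − Q_k^{UL}‖_∞ + 2 α γ d_max · ‖Q_k^{UL} − Q*‖_∞, where ‖Q‖_∞ = max_{(s,a,b)∈S×A×B} |Q(s,a,b)|. -/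
theorem upper_error_system_one_step_bound {S A B : Type*}
    [Fintype S] [Fintype A] [Fintype B] [Nonempty S] [Nonempty A] [Nonempty B]
    (P : S × A × B → S → ℝ) (hP0 : ∀ x s', 0 ≤ P x s') (hP1 : ∀ x, ∑ s' : S, P x s' = 1)
    (R : S × A × B → ℝ) (γ : ℝ) (hγ0 : 0 ≤ γ) (hγ1 : γ < 1)
    (Qstar : S × A × B → ℝ)
    (hQstar : ∀ x : S × A × B, Qstar x = R x + γ * ∑ s' : S, P x s' *
      (Finset.univ.sup' Finset.univ_nonempty fun a' : A =>
        Finset.univ.inf' Finset.univ_nonempty fun b' : B => Qstar (s', a', b')))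
    (α : ℝ) (hα : α ∈ Set.Ioo (0 : ℝ) 1)
    (d : S × A × B → ℝ) (hd : ∀ x, d x ∈ Set.Ioo (0 : ℝ) 1)
    (w : ℕ → S × A × B → ℝ)
    -- πstar s maximizes a ↦ min_b Qstar (s, a, b)
    (πstar : S → A)
    (hπstar : ∀ s a,
      (Finset.univ.inf' Finset.univ_nonempty fun b : B => Qstar (s, a, b)) ≤
        Finset.univ.inf' Finset.univ_nonempty fun b : B => Qstar (s, πstar s, b))
    -- μstar (s, a) minimizes b ↦ Qstar (s, a, b)
    (μstar : S × A → B)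
    (hμstar : ∀ s a b, Qstar (s, a, μstar (s, a)) ≤ Qstar (s, a, b))
    -- the upper comparison system
    (QU : ℕ → S × A × B → ℝ)
    -- τ k s maximizes a ↦ QU k (s, a, μstar (s, a)) - Qstar (s, a, μstar (s, a))
    (τ : ℕ → S → A)
    (hτ : ∀ k s a,
      QU k (s, a, μstar (s, a)) - Qstar (s, a, μstar (s, a)) ≤
        QU k (s, τ k s, μstar (s, τ k s)) - Qstar (s, τ k s, μstar (s, τ k s)))
    (hQU : ∀ k (x : S × A × B), QU (k + 1) x - Qstar x =
      (1 - α * d x) * (QU k x - Qstar x)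
      + α * d x * γ * (∑ s' : S, P x s' *
          (QU k (s', τ k s', μstar (s', τ k s'))
            - Qstar (s', τ k s', μstar (s', τ k s'))))
      + α * w k x)
    -- the upper-lower comparison system
    (QUL : ℕ → S × A × B → ℝ)
    (hQUL : ∀ k (x : S × A × B), QUL (k + 1) x - Qstar x =
      (1 - α * d x) * (QUL k x - Qstar x)
      + α * d x * γ * (∑ s' : S, P x s' *
          (QUL k (s', πstar s', μstar (s', πstar s'))
            - Qstar (s', πstar s', μstar (s', πstar s'))))
      + α * w k x) :
    ∀ k, ‖QU (k + 1) - QUL (k + 1)‖ ≤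
      (1 - α * (Finset.univ.inf' Finset.univ_nonempty d) * (1 - γ)) * ‖QU k - QUL k‖
      + 2 * α * γ * (Finset.univ.sup' Finset.univ_nonempty d) * ‖QUL k - Qstar‖ := by
  intro k
  obtain ⟨hα0, hα1⟩ := hα
  set dmin := Finset.univ.inf' Finset.univ_nonempty d with hdmin
  set dmax := Finset.univ.sup' Finset.univ_nonempty d with hdmax
  set N := ‖QU k - QUL k‖ with hNdef
  set L := ‖QUL k - Qstar‖ with hLdef
  have hN0 : 0 ≤ N := norm_nonneg _
  have hL0 : 0 ≤ L := norm_nonneg _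
  have hptN : ∀ x, |QU k x - QUL k x| ≤ N := by
    intro x
    have := norm_le_pi_norm (QU k - QUL k) x
    simpa [Real.norm_eq_abs] using this
  have hptL : ∀ x, |QUL k x - Qstar x| ≤ L := by
    intro x
    have := norm_le_pi_norm (QUL k - Qstar) x
    simpa [Real.norm_eq_abs] using this
  have hdminle : ∀ x, dmin ≤ d x := fun x => Finset.inf'_le _ (Finset.mem_univ x)
  have hdmaxge : ∀ x, d x ≤ dmax := fun x => Finset.le_sup' _ (Finset.mem_univ x)
  obtain ⟨x₀⟩ := (inferInstance : Nonempty (S × A × B))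
  have hdmin0 : 0 < dmin := by
    rw [hdmin, Finset.lt_inf'_iff]
    exact fun x _ => (hd x).1
  have hdmin1 : dmin < 1 := lt_of_le_of_lt (hdminle x₀) (hd x₀).2
  have hdmax0 : 0 < dmax := lt_of_lt_of_le (hd x₀).1 (hdmaxge x₀)
  have hΔ : ∀ s' : S,
      |(QU k (s', τ k s', μstar (s', τ k s')) - Qstar (s', τ k s', μstar (s', τ k s')))
        - (QUL k (s', πstar s', μstar (s', πstar s'))
            - Qstar (s', πstar s', μstar (s', πstar s')))| ≤ N + 2 * L := by
    intro s'
    rw [abs_le]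
    have h1 := hτ k s' (πstar s')
    have h2 := abs_le.mp (hptN (s', πstar s', μstar (s', πstar s')))
    have h3 := abs_le.mp (hptN (s', τ k s', μstar (s', τ k s')))
    have h4 := abs_le.mp (hptL (s', τ k s', μstar (s', τ k s')))
    have h5 := abs_le.mp (hptL (s', πstar s', μstar (s', πstar s')))
    constructor
    · linarith [h2.1]
    · linarith [h3.2, h4.2, h5.1]
  have key : ∀ x : S × A × B, |QU (k+1) x - QUL (k+1) x| ≤
      (1 - α * dmin * (1 - γ)) * N + 2 * α * γ * dmax * L := by
    intro x
    have hu := hQU k x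
    have hl := hQUL k x
    have hsum : (∑ s' : S, P x s' *
          (QU k (s', τ k s', μstar (s', τ k s'))
            - Qstar (s', τ k s', μstar (s', τ k s'))))
        - (∑ s' : S, P x s' *
          (QUL k (s', πstar s', μstar (s', πstar s'))
            - Qstar (s', πstar s', μstar (s', πstar s'))))
        = ∑ s' : S, P x s' *
          ((QU k (s', τ k s', μstar (s', τ k s'))
            - Qstar (s', τ k s', μstar (s', τ k s')))
          - (QUL k (s', πstar s', μstar (s', πstar s'))
            - Qstar (s', πstar s', μstar (s', πstar s')))) := by
      rw [← Finset.sum_sub_distrib]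
      exact Finset.sum_congr rfl fun s' _ => by ring
    have hDx : QU (k+1) x - QUL (k+1) x = (1 - α * d x) * (QU k x - QUL k x)
        + α * d x * γ * (∑ s' : S, P x s' *
          ((QU k (s', τ k s', μstar (s', τ k s'))
            - Qstar (s', τ k s', μstar (s', τ k s')))
          - (QUL k (s', πstar s', μstar (s', πstar s'))
            - Qstar (s', πstar s', μstar (s', πstar s'))))) := by
      rw [← hsum]; linarith [hu, hl]
    have hS : |∑ s' : S, P x s' *
          ((QU k (s', τ k s', μstar (s', τ k s'))
            - Qstar (s', τ k s', μstar (s', τ k s')))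
          - (QUL k (s', πstar s', μstar (s', πstar s'))
            - Qstar (s', πstar s', μstar (s', πstar s'))))| ≤ N + 2 * L := by
      calc _ ≤ ∑ s' : S, |P x s' *
          ((QU k (s', τ k s', μstar (s', τ k s'))
            - Qstar (s', τ k s', μstar (s', τ k s')))
          - (QUL k (s', πstar s', μstar (s', πstar s'))
            - Qstar (s', πstar s', μstar (s', πstar s'))))| :=
            Finset.abs_sum_le_sum_abs _ _
        _ ≤ ∑ s' : S, P x s' * (N + 2 * L) := by
            refine Finset.sum_le_sum fun s' _ => ?_
            rw [abs_mul, abs_of_nonneg (hP0 x s')]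
            exact mul_le_mul_of_nonneg_left (hΔ s') (hP0 x s')
        _ = N + 2 * L := by rw [← Finset.sum_mul, hP1 x, one_mul]
    have hd1 : 0 ≤ 1 - α * d x := by nlinarith [(hd x).1, (hd x).2]
    have habs : |QU (k+1) x - QUL (k+1) x| ≤
        (1 - α * d x) * N + α * d x * γ * (N + 2 * L) := by
      rw [hDx]
      refine (abs_add_le _ _).trans ?_
      gcongr
      · rw [abs_mul, abs_of_nonneg hd1]
        exact mul_le_mul_of_nonneg_left (hptN x) hd1
      · rw [abs_mul]
        have h0 : 0 ≤ α * d x * γ := mul_nonneg (mul_nonneg hα0.le (hd x).1.le) hγ0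
        rw [abs_of_nonneg h0]
        exact mul_le_mul_of_nonneg_left hS h0
    refine habs.trans ?_
    have hx1 := hdminle x
    have hx2 := hdmaxge x
    nlinarith [mul_nonneg (mul_nonneg (mul_nonneg hα0.le (by linarith : (0:ℝ) ≤ 1 - γ)) hN0)
        (by linarith : (0:ℝ) ≤ d x - dmin),
      mul_nonneg (mul_nonneg (mul_nonneg hα0.le hγ0) hL0)
        (by linarith : (0:ℝ) ≤ dmax - d x)]
  have hR0 : 0 ≤ (1 - α * dmin * (1 - γ)) * N + 2 * α * γ * dmax * L := by
    have hp : 0 ≤ α * dmin := le_of_lt (mul_pos hα0 hdmin0)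
    have hp1 : α * dmin < 1 := by nlinarith [mul_pos (sub_pos.mpr hα1) (sub_pos.mpr hdmin1)]
    have hq : α * dmin * (1 - γ) ≤ α * dmin := mul_le_of_le_one_right hp (by linarith)
    have h1 : 0 ≤ 1 - α * dmin * (1 - γ) := by linarith
    have h2 : (0:ℝ) ≤ 2 * α * γ * dmax * L := by
      have := mul_nonneg (mul_nonneg (mul_nonneg (by linarith : (0:ℝ) ≤ 2 * α) hγ0) hdmax0.le) hL0
      linarith [this]
    have h3 := mul_nonneg h1 hN0
    linarith
  rw [show ‖QU (k+1) - QUL (k+1)‖ = ‖fun x => QU (k+1) x - QUL (k+1) x‖ from rfl]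
  refine (pi_norm_le_iff_of_nonneg hR0).mpr fun x => ?_
  simpa [Real.norm_eq_abs] using key x
end

section
/- Let ρ ∈ (0,1), c ≥ 0, C ≥ 0, and let (e_k)_{k≥0} be a real sequence with e_0 = 0 and e_{i+1} ≤ ρ · e_i + c + C · ρ^i for all i ≥ 0. Then for every k ≥ 1, e_k ≤ c / (1 − ρ) + C · k · ρ^{k−1}. -/
theorem recursive_error_sequence_bound (ρ c C : ℝ) (hρ : ρ ∈ Set.Ioo (0 : ℝ) 1)
    (hc : 0 ≤ c) (hC : 0 ≤ C)
    (e : ℕ → ℝ) (h0 : e 0 = 0)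
    (hrec : ∀ i, e (i + 1) ≤ ρ * e i + c + C * ρ ^ i) :
    ∀ k, 1 ≤ k → e k ≤ c / (1 - ρ) + C * k * ρ ^ (k - 1) := by
  obtain ⟨hρ0, hρ1⟩ := hρ
  have h1ρ : 0 < 1 - ρ := by linarith
  intro k hk
  induction k with
  | zero => omega
  | succ n ih =>
    rcases Nat.eq_or_lt_of_le hk with h | h
    · -- n = 0
      have hn : n = 0 := by omega
      subst hn
      have := hrec 0
      simp [h0] at this
      have hcle : c ≤ c / (1 - ρ) := by
        rw [le_div_iff₀ h1ρ]; nlinarith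
      simpa using le_trans this (by simpa using add_le_add_right hcle C)
    · have hn1 : 1 ≤ n := by omega
      have ihn := ih hn1
      have := hrec n
      have hρn : (0:ℝ) ≤ ρ ^ n := by positivity
      have hkey : ρ * e n ≤ ρ * (c / (1 - ρ) + C * n * ρ ^ (n - 1)) :=
        mul_le_mul_of_nonneg_left ihn (le_of_lt hρ0)
      have hpow : ρ * ρ ^ (n - 1) = ρ ^ n := by
        rw [← pow_succ']
        congr 1; omega
      have hdiv : ρ * (c / (1 - ρ)) + c = c / (1 - ρ) := by
        field_simp; ring
      calc e (n + 1) ≤ ρ * e n + c + C * ρ ^ n := hrec n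
        _ ≤ ρ * (c / (1 - ρ) + C * n * ρ ^ (n - 1)) + c + C * ρ ^ n := by linarith
        _ = (ρ * (c / (1 - ρ)) + c) + C * n * (ρ * ρ ^ (n-1)) + C * ρ ^ n := by ring
        _ = c / (1 - ρ) + C * (n + 1) * ρ ^ n := by rw [hdiv, hpow]; ring
        _ = c / (1 - ρ) + C * (↑(n + 1)) * ρ ^ (n + 1 - 1) := by push_cast; ring_nf
end
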